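/- If A is symmetric positive definite and B is symmetric positive semidefinite with strictly positive diagonal entries, then the Hadamard product A ⊙ B is symmetric positive definite. -/

import Mathlib

open Matrix

/-- If `A` is symmetric positive definite and `B` is symmetric positive semidefinite
with strictly positive diagonal entries, then the Hadamard product `A ⊙ B` is
symmetric positive definite. -/
theorem hadamard_posDef_of_posDef_posSemidef {n : ℕ}
    (A B : Matrix (Fin n) (Fin n) ℝ)
    (hA : A.PosDef) (hB : B.PosSemidef) (hBdiag : ∀ i, 0 < B i i) :
    (Matrix.hadamard A B).PosDef := by
  obtain ⟨C, hC⟩ : ∃ C : Matrix (Fin n) (Fin n) ℝ, B = Cᴴ * C := by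
    open scoped MatrixOrder Matrix.Norms.L2Operator in
    exact CStarAlgebra.nonneg_iff_eq_star_mul_self.mp hB.nonneg
  have hBentry : ∀ i j, B i j = ∑ k, C k i * C k j := by
    intro i j
    rw [hC]
    simp [Matrix.mul_apply, Matrix.conjTranspose_apply]
  rw [Matrix.posDef_iff_dotProduct_mulVec]
  constructor
  · ext i j
    simp only [Matrix.conjTranspose_apply, Matrix.hadamard_apply, star_trivial]
    rw [show A j i = A i j from hA.isHermitian.apply i j ▸ (star_trivial _).symm,
      show B j i = B i j from hB.isHermitian.apply i j ▸ (star_trivial _).symm]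
  · intro x hx
    -- quadratic form equals sum over k of quadratic form of A at y k
    have key : dotProduct (star x) ((Matrix.hadamard A B) *ᵥ x)
        = ∑ k, dotProduct (star (fun i => x i * C k i))
            (A *ᵥ (fun i => x i * C k i)) := by
      simp only [dotProduct, Matrix.mulVec, dotProduct, Matrix.hadamard_apply,
        star_trivial, Pi.star_apply, hBentry, Finset.mul_sum, Finset.sum_mul,
        Finset.mul_sum]
      refine (Finset.sum_congr rfl fun i _ => Finset.sum_comm).trans ?_
      rw [Finset.sum_comm]
      exact Finset.sum_congr rfl fun k _ => Finset.sum_congr rfl fun i _ =>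
        Finset.sum_congr rfl fun j _ => by ring
    rw [key]
    -- find i with x i ≠ 0, then k with C k i ≠ 0
    obtain ⟨i, hi⟩ := Function.ne_iff.mp hx
    have hsum : 0 < ∑ k, C k i * C k i := by
      have := hBdiag i
      rwa [hBentry i i] at this
    obtain ⟨k0, hk0⟩ : ∃ k, C k i ≠ 0 := by
      by_contra h
      push_neg at h
      simp [h] at hsum
    have hy : (fun j => x j * C k0 j) ≠ 0 := by
      intro h
      have := congrFun h i
      simp only [Pi.zero_apply] at this
      exact hi (by
        rcases mul_eq_zero.mp this with h1 | h1
        · exact h1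
        · exact absurd h1 hk0)
    refine Finset.sum_pos' (fun k _ => hA.posSemidef.dotProduct_mulVec_nonneg _) ⟨k0, Finset.mem_univ _, hA.dotProduct_mulVec_pos hy⟩
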